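/- Let A be an n×n positive semidefinite real matrix and let 0 < p < 1. Then the sum of the p-th powers of the diagonal entries of A is at least the sum of the p-th powers of the eigenvalues of A, i.e., ∑_{i=1}^n A_{ii}^p ≥ ∑_{i=1}^n λ_i(A)^p. -/

import Mathlib

open Finset

/-- For an n×n real positive semidefinite matrix `A` and `0 < p < 1`,
the sum of the p-th powers of the diagonal entries of `A` is at least the sum of the
p-th powers of the eigenvalues of `A`. -/
theorem diag_rpow_sum_ge_eigenvalues_rpow_sum
    (n : ℕ) (A : Matrix (Fin n) (Fin n) ℝ) (hA : A.PosSemidef)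
    (p : ℝ) (hp0 : 0 < p) (hp1 : p < 1) :
    ∑ i, (A i i) ^ p ≥ ∑ i, (hA.1.eigenvalues i) ^ p := by
  classical
  set U : Matrix (Fin n) (Fin n) ℝ := (Matrix.IsHermitian.eigenvectorUnitary hA.1 : Matrix (Fin n) (Fin n) ℝ) with hU
  set lam := hA.1.eigenvalues with hlam
  have hdiag : ∀ i, A i i = ∑ j, (U i j)^2 * lam j := by
    intro i
    conv_lhs => rw [hA.1.spectral_theorem]
    simp [Matrix.mul_apply, Matrix.diagonal_apply, Matrix.star_apply, Finset.mul_sum]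
    refine Finset.sum_congr rfl fun j _ => ?_
    simp [hU, Matrix.IsHermitian.eigenvectorUnitary_apply]
    ring
  have hcol : ∀ j, ∑ i, (U i j)^2 = 1 := by
    intro j
    have h2 : star U * U = 1 := Unitary.coe_star_mul_self (Matrix.IsHermitian.eigenvectorUnitary hA.1)
    have h := congrFun (congrFun (congrArg (fun M => (M : Matrix (Fin n) (Fin n) ℝ)) h2) j) j
    simpa [Matrix.mul_apply, Matrix.star_apply, Matrix.one_apply, sq] using h
  have hrow : ∀ i, ∑ j, (U i j)^2 = 1 := by
    intro i
    have h2 : U * star U = 1 := Unitary.coe_mul_star_self (Matrix.IsHermitian.eigenvectorUnitary hA.1)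
    have h := congrFun (congrFun (congrArg (fun M => (M : Matrix (Fin n) (Fin n) ℝ)) h2) i) i
    simpa [Matrix.mul_apply, Matrix.star_apply, Matrix.one_apply, sq] using h
  have hnn : ∀ j, 0 ≤ lam j := fun j => hA.eigenvalues_nonneg j
  have key : ∀ i, ∑ j, (U i j)^2 * (lam j) ^ p ≤ (A i i) ^ p := by
    intro i
    rw [hdiag i]
    have := (Real.concaveOn_rpow hp0.le hp1.le).le_map_sum
      (t := Finset.univ) (w := fun j => (U i j)^2) (p := lam)
      (fun j _ => sq_nonneg _) (hrow i) (fun j _ => hnn j)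
    simpa [smul_eq_mul] using this
  calc ∑ j, (lam j) ^ p = ∑ j, (∑ i, (U i j)^2) * (lam j) ^ p := by
        simp [hcol]
    _ = ∑ i, ∑ j, (U i j)^2 * (lam j) ^ p := by
        rw [Finset.sum_comm]
        simp [Finset.sum_mul]
    _ ≤ ∑ i, (A i i) ^ p := Finset.sum_le_sum fun i _ => key i
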